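/- arXiv:1304.5261 — 4 statements merged into one kernel-verified Lean document; each statement's English description precedes it below -/
import Mathlib

section
/- Let 𝔑₁, 𝔑₂ be von Neumann algebras on a Hilbert space H with 𝔑₁ ⊆ 𝔑₂′, and let ω be a state on the algebra generated by 𝔑₁ and 𝔑₂. Suppose there exist projections E₁, F₁ ∈ 𝔑₁ and E₂, F₂ ∈ 𝔑₂ such that ω((E₁-E₂)²) = ω((F₁-F₂)²) = 0 and ω([E₁,F₁]*[E₁,F₁]) ≠ 0. Then there exist self-adjoint contractions A₁, B₁ ∈ 𝔑₁ and A₂, B₂ ∈ 𝔑₂ with (1/2)|ω(A₁A₂ + A₁B₂ + B₁A₂ - B₁B₂)| > 1, i.e., ω is Bell correlated. -/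
section Aux

lemma lin_nonneg_aux {s g : ℝ} (h : ∀ t : ℝ, 0 ≤ t * s + g) : s = 0 := by
  by_contra hs
  have h1 := h (-(g+1)/s)
  rw [div_mul_cancel₀ _ hs] at h1
  linarith

lemma lin_zero_aux {s g : ℝ} (h : ∀ t : ℝ, t * s + g = 0) : s = 0 := by
  have h0 := h 0; have h1 := h 1; linarith

lemma sa_unit_norm {H : Type*} [NormedAddCommGroup H] [InnerProductSpace ℂ H] [CompleteSpace H]
    (a : H →L[ℂ] H) (hsa : IsSelfAdjoint a) (h1 : a * a = 1) : ‖a‖ ≤ 1 := by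
  have h : ‖a‖ * ‖a‖ = ‖star a * a‖ := (CStarRing.norm_star_mul_self).symm
  rw [hsa.star_eq, h1] at h
  have h2 : ‖(1 : H →L[ℂ] H)‖ ≤ 1 := ContinuousLinearMap.norm_id_le
  nlinarith [norm_nonneg a]

lemma cube_poly_norm {H : Type*} [NormedAddCommGroup H] [InnerProductSpace ℂ H] [CompleteSpace H]
    [Nontrivial H] (a : H →L[ℂ] H) (hsa : IsSelfAdjoint a) (hn : ‖a‖ ≤ 1) :
    ‖(2:ℂ)⁻¹ • (a + a + a - a^3)‖ ≤ 1 := by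
  have hcfc : cfc (fun t : ℝ => (3*t - t^3)/2) a = (2:ℂ)⁻¹ • (a + a + a - a^3) := by
    rw [show (fun t : ℝ => (3*t - t^3)/2) = fun t : ℝ => (2:ℝ)⁻¹ * ((t + t + t) - t^3) by
      ext t; ring]
    rw [cfc_const_mul ((2:ℝ)⁻¹) (fun t : ℝ => (t + t + t) - t^3) a,
      cfc_sub (R := ℝ) (fun t : ℝ => t + t + t) (fun t : ℝ => t^3) a,
      cfc_add (R := ℝ) a (fun t : ℝ => t + t) (fun t : ℝ => t),
      cfc_add (R := ℝ) a (fun t : ℝ => t) (fun t : ℝ => t),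
      cfc_pow (R := ℝ) (fun t : ℝ => t) 3 (a := a),
      cfc_id' ℝ a]
    rw [show ((2:ℝ)⁻¹) • (a + a + a - a^3) = ((2⁻¹:ℝ):ℂ) • (a + a + a - a^3) from
      (Complex.coe_smul _ _).symm]
    norm_num
  rw [← hcfc]
  apply norm_cfc_le zero_le_one
  intro x hx
  have hxa := spectrum.norm_le_norm_of_mem hx
  have hx1 : |x| ≤ 1 := by simpa using hxa.trans hn
  rw [abs_le] at hx1
  rw [Real.norm_eq_abs, abs_le]
  constructor <;> nlinarith [sq_nonneg (x-1), sq_nonneg (x+1), hx1.1, hx1.2]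

lemma cs_zero' {A : Type*} [Ring A] [StarRing A] [Algebra ℂ A] [StarModule ℂ A]
    (ω : A →ₗ[ℂ] ℂ)
    (hpos : ∀ X : A, 0 ≤ (ω (star X * X)).re ∧ (ω (star X * X)).im = 0)
    (x : A) (h0 : ω (star x * x) = 0) (y : A) : ω (y * x) = 0 := by
  suffices hkey : ∀ z : A, ω (star z * x) = 0 by
    have := hkey (star y); rwa [star_star] at this
  intro z
  set α : ℂ := ω (star x * z) with hα
  set β : ℂ := ω (star z * x) with hβ
  set γ : ℂ := ω (star z * z) with hγ
  have expand : ∀ c : ℂ, ω (star (c • x + z) * (c • x + z))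
      = (starRingEnd ℂ) c * α + c * β + γ := by
    intro c
    have h2 : star (c • x + z) * (c • x + z)
        = (c * (starRingEnd ℂ) c) • (star x * x) + (starRingEnd ℂ) c • (star x * z)
          + c • (star z * x) + star z * z := by
      simp only [star_add, star_smul, add_mul, mul_add, smul_mul_assoc, mul_smul_comm,
        smul_smul, smul_add, Complex.star_def]
      abel
    rw [h2]
    simp only [map_add, map_smul, h0, smul_eq_mul, mul_zero, zero_add, hα, hβ, hγ]
  have key : ∀ c : ℂ, 0 ≤ ((starRingEnd ℂ) c * α + c * β + γ).re ∧
      ((starRingEnd ℂ) c * α + c * β + γ).im = 0 := by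
    intro c; rw [← expand c]; exact hpos _
  have hre1 : ∀ t : ℝ, 0 ≤ t * (α.re + β.re) + γ.re := by
    intro t
    have h3 := (key (t : ℂ)).1
    simp only [Complex.add_re, Complex.mul_re, Complex.conj_ofReal, Complex.ofReal_re,
      Complex.ofReal_im] at h3
    nlinarith [h3]
  have him1 : ∀ t : ℝ, t * (α.im + β.im) + γ.im = 0 := by
    intro t
    have h3 := (key (t : ℂ)).2
    simp only [Complex.add_im, Complex.mul_im, Complex.conj_ofReal, Complex.ofReal_re,
      Complex.ofReal_im] at h3
    nlinarith [h3]
  have hre2 : ∀ t : ℝ, 0 ≤ t * (α.im - β.im) + γ.re := by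
    intro t
    have h3 := (key ((t : ℂ) * Complex.I)).1
    simp only [map_mul, Complex.conj_ofReal, Complex.conj_I, Complex.add_re, Complex.mul_re,
      Complex.mul_im, Complex.I_re, Complex.I_im, Complex.ofReal_re, Complex.ofReal_im,
      Complex.neg_re, Complex.neg_im] at h3
    nlinarith [h3]
  have him2 : ∀ t : ℝ, t * (β.re - α.re) + γ.im = 0 := by
    intro t
    have h3 := (key ((t : ℂ) * Complex.I)).2
    simp only [map_mul, Complex.conj_ofReal, Complex.conj_I, Complex.add_im, Complex.mul_re,
      Complex.mul_im, Complex.I_re, Complex.I_im, Complex.ofReal_re, Complex.ofReal_im,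
      Complex.neg_re, Complex.neg_im] at h3
    nlinarith [h3]
  have f1 : α.re + β.re = 0 := lin_nonneg_aux hre1
  have f2 : α.im + β.im = 0 := lin_zero_aux him1
  have f3 : α.im - β.im = 0 := lin_nonneg_aux hre2
  have f4 : β.re - α.re = 0 := lin_zero_aux him2
  have hb : β = 0 := by
    rw [Complex.ext_iff]
    norm_num
    constructor <;> linarith
  rw [hβ] at hb; exact hb

end Aux

set_option maxHeartbeats 2000000 in
/-- Theorem 2 of the paper: every EPR state for incommensurable pairs is
Bell correlated. -/
theorem stmt_3 {H : Type*} [NormedAddCommGroup H] [InnerProductSpace ℂ H] [CompleteSpace H]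
    (N₁ N₂ : VonNeumannAlgebra H)
    (hNcomm : ∀ x ∈ N₁, ∀ y ∈ N₂, x * y = y * x)
    (ω : (H →L[ℂ] H) →ₗ[ℂ] ℂ)
    (hpos : ∀ X : H →L[ℂ] H, 0 ≤ (ω (star X * X)).re ∧ (ω (star X * X)).im = 0)
    (hone : ω 1 = 1)
    (E₁ F₁ E₂ F₂ : H →L[ℂ] H)
    (hE₁ : E₁ ∈ N₁) (hF₁ : F₁ ∈ N₁) (hE₂ : E₂ ∈ N₂) (hF₂ : F₂ ∈ N₂)
    (hE₁p : IsIdempotentElem E₁) (hE₁sa : IsSelfAdjoint E₁)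
    (hF₁p : IsIdempotentElem F₁) (hF₁sa : IsSelfAdjoint F₁)
    (hE₂p : IsIdempotentElem E₂) (hE₂sa : IsSelfAdjoint E₂)
    (hF₂p : IsIdempotentElem F₂) (hF₂sa : IsSelfAdjoint F₂)
    (hEPRE : ω ((E₁ - E₂) * (E₁ - E₂)) = 0)
    (hEPRF : ω ((F₁ - F₂) * (F₁ - F₂)) = 0)
    (hnc : ω (star (E₁ * F₁ - F₁ * E₁) * (E₁ * F₁ - F₁ * E₁)) ≠ 0) :
    ∃ A₁ ∈ N₁, ∃ B₁ ∈ N₁, ∃ A₂ ∈ N₂, ∃ B₂ ∈ N₂,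
      IsSelfAdjoint A₁ ∧ ‖A₁‖ ≤ 1 ∧ IsSelfAdjoint B₁ ∧ ‖B₁‖ ≤ 1 ∧
      IsSelfAdjoint A₂ ∧ ‖A₂‖ ≤ 1 ∧ IsSelfAdjoint B₂ ∧ ‖B₂‖ ≤ 1 ∧
      1 < (1 / 2) * ‖ω (A₁ * A₂ + A₁ * B₂ + B₁ * A₂ - B₁ * B₂)‖ := by
  rcases subsingleton_or_nontrivial H with hH | hH
  · exfalso
    apply hnc
    have h0 : (E₁ * F₁ - F₁ * E₁ : H →L[ℂ] H) = 0 := Subsingleton.elim _ _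
    rw [h0]
    simp
  -- notation
  obtain ⟨C, hC⟩ : ∃ C : H →L[ℂ] H, C = E₁ * F₁ - F₁ * E₁ := ⟨_, rfl⟩
  obtain ⟨P, hP⟩ : ∃ P : H →L[ℂ] H, P = E₁ + F₁ - 1 := ⟨_, rfl⟩
  obtain ⟨Q, hQ⟩ : ∃ Q : H →L[ℂ] H, Q = E₁ - F₁ := ⟨_, rfl⟩
  obtain ⟨p₂, hp₂⟩ : ∃ p₂ : H →L[ℂ] H, p₂ = E₂ + F₂ - 1 := ⟨_, rfl⟩
  obtain ⟨q₂, hq₂⟩ : ∃ q₂ : H →L[ℂ] H, q₂ = E₂ - F₂ := ⟨_, rfl⟩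
  obtain ⟨A₁, hA₁⟩ : ∃ A₁ : H →L[ℂ] H, A₁ = E₁ + E₁ - 1 := ⟨_, rfl⟩
  obtain ⟨B₁, hB₁⟩ : ∃ B₁ : H →L[ℂ] H, B₁ = F₁ + F₁ - 1 := ⟨_, rfl⟩
  obtain ⟨G, hG⟩ : ∃ G : H →L[ℂ] H, G = p₂ + p₂ + p₂ - p₂^3 := ⟨_, rfl⟩
  obtain ⟨K, hK⟩ : ∃ K : H →L[ℂ] H, K = q₂ + q₂ + q₂ - q₂^3 := ⟨_, rfl⟩
  obtain ⟨A₂, hA₂⟩ : ∃ A₂ : H →L[ℂ] H, A₂ = (2:ℂ)⁻¹ • G := ⟨_, rfl⟩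
  obtain ⟨B₂, hB₂⟩ : ∃ B₂ : H →L[ℂ] H, B₂ = (2:ℂ)⁻¹ • K := ⟨_, rfl⟩
  rw [← hC] at hnc
  -- memberships
  have hA₁m : A₁ ∈ N₁ := hA₁ ▸ sub_mem (add_mem hE₁ hE₁) (one_mem _)
  have hB₁m : B₁ ∈ N₁ := hB₁ ▸ sub_mem (add_mem hF₁ hF₁) (one_mem _)
  have hp₂m : p₂ ∈ N₂ := hp₂ ▸ sub_mem (add_mem hE₂ hF₂) (one_mem _)
  have hq₂m : q₂ ∈ N₂ := hq₂ ▸ sub_mem hE₂ hF₂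
  have hGm : G ∈ N₂ := hG ▸ sub_mem (add_mem (add_mem hp₂m hp₂m) hp₂m) (pow_mem hp₂m 3)
  have hKm : K ∈ N₂ := hK ▸ sub_mem (add_mem (add_mem hq₂m hq₂m) hq₂m) (pow_mem hq₂m 3)
  have hA₂m : A₂ ∈ N₂ := hA₂ ▸ N₂.toStarSubalgebra.toSubalgebra.smul_mem hGm _
  have hB₂m : B₂ ∈ N₂ := hB₂ ▸ N₂.toStarSubalgebra.toSubalgebra.smul_mem hKm _
  -- selfadjointness
  have hA₁sa : IsSelfAdjoint A₁ := hA₁ ▸ ((hE₁sa.add hE₁sa).sub (IsSelfAdjoint.one _))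
  have hB₁sa : IsSelfAdjoint B₁ := hB₁ ▸ ((hF₁sa.add hF₁sa).sub (IsSelfAdjoint.one _))
  have hp₂sa : IsSelfAdjoint p₂ := hp₂ ▸ ((hE₂sa.add hF₂sa).sub (IsSelfAdjoint.one _))
  have hq₂sa : IsSelfAdjoint q₂ := hq₂ ▸ hE₂sa.sub hF₂sa
  have hGsa : IsSelfAdjoint G := hG ▸ ((hp₂sa.add hp₂sa).add hp₂sa).sub (hp₂sa.pow 3)
  have hKsa : IsSelfAdjoint K := hK ▸ ((hq₂sa.add hq₂sa).add hq₂sa).sub (hq₂sa.pow 3)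
  have hA₂sa : IsSelfAdjoint A₂ := by
    rw [hA₂, IsSelfAdjoint, star_smul, hGsa.star_eq]
    norm_num
  have hB₂sa : IsSelfAdjoint B₂ := by
    rw [hB₂, IsSelfAdjoint, star_smul, hKsa.star_eq]
    norm_num
  -- norms
  have hA₁u : A₁ * A₁ = 1 := by
    have h : A₁ * A₁ = E₁*E₁ + E₁*E₁ + E₁*E₁ + E₁*E₁ - E₁ - E₁ - E₁ - E₁ + 1 := by
      rw [hA₁]; noncomm_ring
    rw [hE₁p.eq] at h
    rw [h]; abel
  have hB₁u : B₁ * B₁ = 1 := by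
    have h : B₁ * B₁ = F₁*F₁ + F₁*F₁ + F₁*F₁ + F₁*F₁ - F₁ - F₁ - F₁ - F₁ + 1 := by
      rw [hB₁]; noncomm_ring
    rw [hF₁p.eq] at h
    rw [h]; abel
  have hA₁n : ‖A₁‖ ≤ 1 := sa_unit_norm A₁ hA₁sa hA₁u
  have hB₁n : ‖B₁‖ ≤ 1 := sa_unit_norm B₁ hB₁sa hB₁u
  have ha₂u : (E₂ + E₂ - 1) * (E₂ + E₂ - 1) = 1 := by
    have h : (E₂ + E₂ - 1) * (E₂ + E₂ - 1)
        = E₂*E₂ + E₂*E₂ + E₂*E₂ + E₂*E₂ - E₂ - E₂ - E₂ - E₂ + 1 := by noncomm_ring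
    rw [hE₂p.eq] at h
    rw [h]; abel
  have hb₂u : (F₂ + F₂ - 1) * (F₂ + F₂ - 1) = 1 := by
    have h : (F₂ + F₂ - 1) * (F₂ + F₂ - 1)
        = F₂*F₂ + F₂*F₂ + F₂*F₂ + F₂*F₂ - F₂ - F₂ - F₂ - F₂ + 1 := by noncomm_ring
    rw [hF₂p.eq] at h
    rw [h]; abel
  have ha₂n : ‖E₂ + E₂ - 1‖ ≤ 1 :=
    sa_unit_norm _ ((hE₂sa.add hE₂sa).sub (IsSelfAdjoint.one _)) ha₂u
  have hb₂n : ‖F₂ + F₂ - 1‖ ≤ 1 :=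
    sa_unit_norm _ ((hF₂sa.add hF₂sa).sub (IsSelfAdjoint.one _)) hb₂u
  have hp₂n : ‖p₂‖ ≤ 1 := by
    have h : p₂ = (2:ℂ)⁻¹ • ((E₂ + E₂ - 1) + (F₂ + F₂ - 1)) := by rw [hp₂]; module
    rw [h, norm_smul]
    have := norm_add_le (E₂ + E₂ - 1) (F₂ + F₂ - 1)
    simp only [norm_inv, Complex.norm_ofNat]
    nlinarith
  have hq₂n : ‖q₂‖ ≤ 1 := by
    have h : q₂ = (2:ℂ)⁻¹ • ((E₂ + E₂ - 1) - (F₂ + F₂ - 1)) := by rw [hq₂]; module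
    rw [h, norm_smul]
    have := norm_sub_le (E₂ + E₂ - 1) (F₂ + F₂ - 1)
    simp only [norm_inv, Complex.norm_ofNat]
    nlinarith
  have hA₂n : ‖A₂‖ ≤ 1 := by
    have := cube_poly_norm p₂ hp₂sa hp₂n
    rwa [hA₂, hG]
  have hB₂n : ‖B₂‖ ≤ 1 := by
    have := cube_poly_norm q₂ hq₂sa hq₂n
    rwa [hB₂, hK]
  -- replacement lemmas
  have hrE : ∀ W : H →L[ℂ] H, ω (W * (E₁ - E₂)) = 0 := by
    intro W
    apply cs_zero' ω hpos (E₁ - E₂) _ W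
    rwa [(hE₁sa.sub hE₂sa).star_eq]
  have hrF : ∀ W : H →L[ℂ] H, ω (W * (F₁ - F₂)) = 0 := by
    intro W
    apply cs_zero' ω hpos (F₁ - F₂) _ W
    rwa [(hF₁sa.sub hF₂sa).star_eq]
  have hrP : ∀ W : H →L[ℂ] H, ω (W * p₂) = ω (W * P) := by
    intro W
    have h : W * p₂ = W * P - W * (E₁ - E₂) - W * (F₁ - F₂) := by
      rw [hp₂, hP]; noncomm_ring
    rw [h, map_sub, map_sub, hrE, hrF, sub_zero, sub_zero]
  have hrQ : ∀ W : H →L[ℂ] H, ω (W * q₂) = ω (W * Q) := by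
    intro W
    have h : W * q₂ = W * Q - W * (E₁ - E₂) + W * (F₁ - F₂) := by
      rw [hq₂, hQ]; noncomm_ring
    rw [h, map_add, map_sub, hrE, hrF, sub_zero, add_zero]
  -- commutation
  have cP : Commute P p₂ := by
    have h : P * p₂ - p₂ * P = (E₁*E₂ - E₂*E₁) + (E₁*F₂ - F₂*E₁)
        + (F₁*E₂ - E₂*F₁) + (F₁*F₂ - F₂*F₁) := by
      rw [hP, hp₂]; noncomm_ring
    rw [hNcomm E₁ hE₁ E₂ hE₂, hNcomm E₁ hE₁ F₂ hF₂, hNcomm F₁ hF₁ E₂ hE₂,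
      hNcomm F₁ hF₁ F₂ hF₂] at h
    simp only [sub_self, add_zero] at h
    exact sub_eq_zero.mp h
  have cQ : Commute Q q₂ := by
    have h : Q * q₂ - q₂ * Q = (E₁*E₂ - E₂*E₁) - (E₁*F₂ - F₂*E₁)
        - (F₁*E₂ - E₂*F₁) + (F₁*F₂ - F₂*F₁) := by
      rw [hQ, hq₂]; noncomm_ring
    rw [hNcomm E₁ hE₁ E₂ hE₂, hNcomm E₁ hE₁ F₂ hF₂, hNcomm F₁ hF₁ E₂ hE₂,
      hNcomm F₁ hF₁ F₂ hF₂] at h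
    simp only [sub_self, sub_zero, add_zero, zero_sub, neg_zero] at h
    exact sub_eq_zero.mp h
  -- cube reduction
  have redP : ω (P * p₂^3) = ω (P*P*(P*P)) := by
    calc ω (P * p₂^3) = ω ((P * p₂^2) * p₂) := by rw [show P * p₂^3 = (P * p₂^2) * p₂ by
          noncomm_ring]
    _ = ω ((P * p₂^2) * P) := hrP _
    _ = ω (((P*P) * p₂) * p₂) := by
          rw [show (P * p₂^2) * P = ((P*P) * p₂) * p₂ by
            rw [mul_assoc, (cP.pow_right 2).symm.eq]; noncomm_ring]
    _ = ω (((P*P) * p₂) * P) := hrP _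
    _ = ω (((P*P) * P) * p₂) := by rw [show ((P*P) * p₂) * P = ((P*P) * P) * p₂ by
          rw [mul_assoc, cP.symm.eq, ← mul_assoc]]
    _ = ω (((P*P) * P) * P) := hrP _
    _ = ω (P*P*(P*P)) := by rw [show ((P*P) * P) * P = P*P*(P*P) by noncomm_ring]
  have redQ : ω (Q * q₂^3) = ω (Q*Q*(Q*Q)) := by
    calc ω (Q * q₂^3) = ω ((Q * q₂^2) * q₂) := by rw [show Q * q₂^3 = (Q * q₂^2) * q₂ by
          noncomm_ring]
    _ = ω ((Q * q₂^2) * Q) := hrQ _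
    _ = ω (((Q*Q) * q₂) * q₂) := by
          rw [show (Q * q₂^2) * Q = ((Q*Q) * q₂) * q₂ by
            rw [mul_assoc, (cQ.pow_right 2).symm.eq]; noncomm_ring]
    _ = ω (((Q*Q) * q₂) * Q) := hrQ _
    _ = ω (((Q*Q) * Q) * q₂) := by rw [show ((Q*Q) * q₂) * Q = ((Q*Q) * Q) * q₂ by
          rw [mul_assoc, cQ.symm.eq, ← mul_assoc]]
    _ = ω (((Q*Q) * Q) * Q) := hrQ _
    _ = ω (Q*Q*(Q*Q)) := by rw [show ((Q*Q) * Q) * Q = Q*Q*(Q*Q) by noncomm_ring]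
  -- ω of P*G and Q*K
  have hPG : ω (P * G) = ω (P*P) + ω (P*P) + ω (P*P) - ω (P*P*(P*P)) := by
    have h : P * G = P*p₂ + P*p₂ + P*p₂ - P*p₂^3 := by rw [hG]; noncomm_ring
    rw [h, map_sub, map_add, map_add, hrP, redP]
  have hQK : ω (Q * K) = ω (Q*Q) + ω (Q*Q) + ω (Q*Q) - ω (Q*Q*(Q*Q)) := by
    have h : Q * K = Q*q₂ + Q*q₂ + Q*q₂ - Q*q₂^3 := by rw [hK]; noncomm_ring
    rw [h, map_sub, map_add, map_add, hrQ, redQ]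
  -- algebraic identities with idempotents
  have hQP : Q * P = C := by
    have h : Q * P = E₁*E₁ + E₁*F₁ - E₁ - F₁*E₁ - F₁*F₁ + F₁ := by
      rw [hQ, hP]; noncomm_ring
    rw [hE₁p.eq, hF₁p.eq] at h
    rw [h, hC]; abel
  have hPQ : P * Q = -(Q * P) := by
    have h : P * Q = E₁*E₁ - E₁*F₁ + F₁*E₁ - F₁*F₁ - E₁ + F₁ := by
      rw [hQ, hP]; noncomm_ring
    rw [hE₁p.eq, hF₁p.eq] at h
    rw [h, hQP, hC]; abel
  have hsum : Q * Q = 1 - P * P := by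
    have h : P*P + Q*Q = E₁*E₁ + E₁*E₁ + (F₁*F₁ + F₁*F₁) - E₁ - E₁ - F₁ - F₁ + 1 := by
      rw [hP, hQ]; noncomm_ring
    rw [hE₁p.eq, hF₁p.eq] at h
    have h1 : P*P + Q*Q = 1 := by rw [h]; abel
    rw [← h1]; abel
  have huv : (P*P) * (Q*Q) = -(C*C) := by
    calc (P*P) * (Q*Q) = P*(P*Q)*Q := by noncomm_ring
    _ = P*(-(Q*P))*Q := by rw [hPQ]
    _ = -((P*Q)*(P*Q)) := by noncomm_ring
    _ = -((-(Q*P))*(-(Q*P))) := by rw [hPQ]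
    _ = -((Q*P)*(Q*P)) := by noncomm_ring
    _ = -(C*C) := by rw [hQP]
  -- the key value
  have hval : ω (P*P) + ω (P*P) + ω (P*P) - ω (P*P*(P*P))
      + (ω (Q*Q) + ω (Q*Q) + ω (Q*Q) - ω (Q*Q*(Q*Q)))
      = 2 + (ω (star C * C) + ω (star C * C)) := by
    have hCsa : star C = -C := by
      rw [hC, star_sub, star_mul, star_mul, hE₁sa.star_eq, hF₁sa.star_eq]
      abel
    have hCC : -(C * C) = star C * C := by rw [hCsa, neg_mul]
    have hop : P*P + P*P + P*P - P*P*(P*P) + (Q*Q + Q*Q + Q*Q - Q*Q*(Q*Q))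
        = 1 + 1 + (star C * C + star C * C) := by
      rw [← hCC, ← huv, hsum]
      noncomm_ring
    have := congrArg ω hop
    simp only [map_add, map_sub, map_mul, hone] at this ⊢
    rw [this]
    norm_num
  -- assemble
  have hT : A₁*A₂ + A₁*B₂ + B₁*A₂ - B₁*B₂ = (2:ℂ)⁻¹ • ((P*G + P*G) + (Q*K + Q*K)) := by
    rw [hA₂, hB₂, mul_smul_comm, mul_smul_comm, mul_smul_comm, mul_smul_comm,
      ← smul_add, ← smul_add, ← smul_sub]
    congr 1
    rw [hA₁, hB₁, hP, hQ]; noncomm_ring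
  have hωT : ω (A₁ * A₂ + A₁ * B₂ + B₁ * A₂ - B₁ * B₂)
      = 2 + (ω (star C * C) + ω (star C * C)) := by
    rw [hT, map_smul, smul_eq_mul, map_add, map_add, map_add, hPG, hQK, ← hval]
    ring
  obtain ⟨hr1, hr2⟩ := hpos C
  have hrne : (ω (star C * C)).re ≠ 0 := by
    intro h
    exact hnc (Complex.ext (by simp [h]) (by simp [hr2]))
  have hrpos : 0 < (ω (star C * C)).re := lt_of_le_of_ne hr1 (Ne.symm hrne)
  refine ⟨A₁, hA₁m, B₁, hB₁m, A₂, hA₂m, B₂, hB₂m, hA₁sa, hA₁n, hB₁sa, hB₁n,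
    hA₂sa, hA₂n, hB₂sa, hB₂n, ?_⟩
  rw [hωT]
  have hre : (2 + (ω (star C * C) + ω (star C * C)))
      = ((2 + 2*(ω (star C * C)).re : ℝ) : ℂ) := by
    apply Complex.ext
    · simp
      ring
    · simp [hr2]
  rw [hre, Complex.norm_real, Real.norm_eq_abs, abs_of_pos (by linarith)]
  linarith
end

section
/- Let A₁, B₁ be self-adjoint operators on a Hilbert space with A₁B₁ + B₁A₁ = 0 and A₁² = B₁² = S for a projection S with A₁, B₁ ∈ S B(H) S. Let E = (1/√2·(A₁+B₁) + S)/2 and F = (1/√2·(A₁-B₁) + S)/2. Then E and F are projections satisfying (2E - S)(2F - S) + (2F - S)(2E - S) = 0. -/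
lemma proj_aux6 {H : Type*} [NormedAddCommGroup H] [InnerProductSpace ℂ H] [CompleteSpace H]
    (S X : H →L[ℂ] H) (hS : IsIdempotentElem S) (hXX : X * X = S)
    (hXS : X * S = X) (hSX : S * X = X) :
    IsIdempotentElem ((2 : ℂ)⁻¹ • (X + S)) := by
  unfold IsIdempotentElem
  rw [smul_mul_assoc, mul_smul_comm, smul_smul, add_mul, mul_add, mul_add,
    hXX, hXS, hSX, hS.eq]
  module

/-- From anticommuting self-adjoint operators `A₁, B₁` supported on a projection
`S` with `A₁² = B₁² = S`, the operators `E = ((1/√2)(A₁+B₁) + S)/2` and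
`F = ((1/√2)(A₁-B₁) + S)/2` are projections with `(2E-S)(2F-S) + (2F-S)(2E-S) = 0`. -/
theorem stmt_6 {H : Type*} [NormedAddCommGroup H] [InnerProductSpace ℂ H] [CompleteSpace H]
    (S A₁ B₁ : H →L[ℂ] H)
    (hSp : IsIdempotentElem S) (hSsa : IsSelfAdjoint S)
    (hA₁sa : IsSelfAdjoint A₁) (hB₁sa : IsSelfAdjoint B₁)
    (hA₁S : S * A₁ * S = A₁) (hB₁S : S * B₁ * S = B₁)
    (hA₁sq : A₁ * A₁ = S) (hB₁sq : B₁ * B₁ = S)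
    (hanti : A₁ * B₁ + B₁ * A₁ = 0)
    (E F : H →L[ℂ] H)
    (hE : E = (2 : ℂ)⁻¹ • (((Real.sqrt 2 : ℂ))⁻¹ • (A₁ + B₁) + S))
    (hF : F = (2 : ℂ)⁻¹ • (((Real.sqrt 2 : ℂ))⁻¹ • (A₁ - B₁) + S)) :
    (IsIdempotentElem E ∧ IsSelfAdjoint E) ∧ (IsIdempotentElem F ∧ IsSelfAdjoint F) ∧
      ((2 : ℂ) • E - S) * ((2 : ℂ) • F - S) + ((2 : ℂ) • F - S) * ((2 : ℂ) • E - S) = 0 := by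
  set c : ℂ := ((Real.sqrt 2 : ℂ))⁻¹ with hc
  have h2 : ((Real.sqrt 2 : ℂ)) * ((Real.sqrt 2 : ℂ)) = 2 := by
    norm_cast
    exact Real.mul_self_sqrt (by norm_num)
  have hcc : c * c = (2 : ℂ)⁻¹ := by rw [hc, ← mul_inv, h2]
  -- support relations
  have hSA : S * A₁ = A₁ := by conv_lhs => rw [← hA₁S, ← mul_assoc, ← mul_assoc, hSp.eq]; exact hA₁S
  have hAS : A₁ * S = A₁ := by conv_lhs => rw [← hA₁S, mul_assoc, mul_assoc, hSp.eq, ← mul_assoc]; exact hA₁S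
  have hSB : S * B₁ = B₁ := by conv_lhs => rw [← hB₁S, ← mul_assoc, ← mul_assoc, hSp.eq]; exact hB₁S
  have hBS : B₁ * S = B₁ := by conv_lhs => rw [← hB₁S, mul_assoc, mul_assoc, hSp.eq, ← mul_assoc]; exact hB₁S
  set X : H →L[ℂ] H := c • (A₁ + B₁) with hX
  set Y : H →L[ℂ] H := c • (A₁ - B₁) with hY
  have hPP : (A₁ + B₁) * (A₁ + B₁) = S + S + (A₁ * B₁ + B₁ * A₁) := by
    rw [mul_add, add_mul, add_mul, hA₁sq, hB₁sq]; abel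
  have hQQ : (A₁ - B₁) * (A₁ - B₁) = S + S - (A₁ * B₁ + B₁ * A₁) := by
    rw [mul_sub, sub_mul, sub_mul, hA₁sq, hB₁sq]; abel
  have hXX : X * X = S := by
    rw [hX, smul_mul_assoc, mul_smul_comm, smul_smul, hcc, hPP, hanti, add_zero]
    module
  have hYY : Y * Y = S := by
    rw [hY, smul_mul_assoc, mul_smul_comm, smul_smul, hcc, hQQ, hanti, sub_zero]
    module
  have hXS : X * S = X := by rw [hX, smul_mul_assoc, add_mul, hAS, hBS]
  have hSX : S * X = X := by rw [hX, mul_smul_comm, mul_add, hSA, hSB]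
  have hYS : Y * S = Y := by rw [hY, smul_mul_assoc, sub_mul, hAS, hBS]
  have hSY : S * Y = Y := by rw [hY, mul_smul_comm, mul_sub, hSA, hSB]
  have hE' : E = (2 : ℂ)⁻¹ • (X + S) := hE
  have hF' : F = (2 : ℂ)⁻¹ • (Y + S) := hF
  have hEsa : IsSelfAdjoint E := by
    rw [hE', IsSelfAdjoint]
    simp only [star_smul, star_add, hX, star_smul, star_add, hA₁sa.star_eq,
      hB₁sa.star_eq, hSsa.star_eq, hc, Complex.star_def, map_inv₀, Complex.conj_ofReal,
      map_ofNat]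
  have hFsa : IsSelfAdjoint F := by
    rw [hF', IsSelfAdjoint]
    simp only [star_smul, star_add, hY, star_smul, star_sub, hA₁sa.star_eq,
      hB₁sa.star_eq, hSsa.star_eq, hc, Complex.star_def, map_inv₀, Complex.conj_ofReal,
      map_ofNat]
  have h2E : (2 : ℂ) • E - S = X := by rw [hE', smul_smul]; module
  have h2F : (2 : ℂ) • F - S = Y := by rw [hF', smul_smul]; module
  refine ⟨⟨hE' ▸ proj_aux6 S X hSp hXX hXS hSX, hEsa⟩,
    ⟨hF' ▸ proj_aux6 S Y hSp hYY hYS hSY, hFsa⟩, ?_⟩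
  rw [h2E, h2F, hX, hY, smul_mul_assoc, mul_smul_comm, smul_smul,
    smul_mul_assoc, mul_smul_comm, smul_smul, ← smul_add]
  have : (A₁ + B₁) * (A₁ - B₁) + (A₁ - B₁) * (A₁ + B₁) = 0 := by
    rw [mul_sub, add_mul, add_mul, mul_add, sub_mul, sub_mul, hA₁sq, hB₁sq]; abel
  rw [this, smul_zero]
end

section
/- Let A₁ = 2E₁ - S and B₁ = 2F₁ - S where E₁, F₁ ∈ S B(H) S are projections with A₁B₁ + B₁A₁ = 0 and A₁² = B₁² = S, and let ω be a state with ω(S) = 1. Then [E₁,F₁]*[E₁,F₁] = (1/16)[A₁,B₁]*[A₁,B₁] and ω([A₁,B₁]*[A₁,B₁]) = 4, hence ω([E₁,F₁]*[E₁,F₁]) = 1/4 ≠ 0. -/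
/-- For `A₁ = 2E₁ - S`, `B₁ = 2F₁ - S` with `E₁, F₁` projections dominated by `S`
satisfying `A₁B₁ + B₁A₁ = 0` and `A₁² = B₁² = S`, and a state `ω` with `ω(S) = 1`:
`[E₁,F₁]*[E₁,F₁] = (1/16)[A₁,B₁]*[A₁,B₁]`, `ω([A₁,B₁]*[A₁,B₁]) = 4`, hence
`ω([E₁,F₁]*[E₁,F₁]) = 1/4 ≠ 0`. -/
theorem stmt_8 {H : Type*} [NormedAddCommGroup H] [InnerProductSpace ℂ H] [CompleteSpace H]
    (S E₁ F₁ : H →L[ℂ] H)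
    (hSp : IsIdempotentElem S) (hSsa : IsSelfAdjoint S)
    (hE₁p : IsIdempotentElem E₁) (hE₁sa : IsSelfAdjoint E₁)
    (hF₁p : IsIdempotentElem F₁) (hF₁sa : IsSelfAdjoint F₁)
    (hE₁S : S * E₁ = E₁) (hSE₁ : E₁ * S = E₁) (hF₁S : S * F₁ = F₁) (hSF₁ : F₁ * S = F₁)
    (A₁ B₁ : H →L[ℂ] H)
    (hA₁ : A₁ = (2 : ℂ) • E₁ - S) (hB₁ : B₁ = (2 : ℂ) • F₁ - S)
    (hanti : A₁ * B₁ + B₁ * A₁ = 0)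
    (hA₁sq : A₁ * A₁ = S) (hB₁sq : B₁ * B₁ = S)
    (ω : (H →L[ℂ] H) →ₗ[ℂ] ℂ)
    (hpos : ∀ X : H →L[ℂ] H, 0 ≤ (ω (star X * X)).re ∧ (ω (star X * X)).im = 0)
    (hone : ω 1 = 1) (hS : ω S = 1) :
    star (E₁ * F₁ - F₁ * E₁) * (E₁ * F₁ - F₁ * E₁) =
        (16 : ℂ)⁻¹ • (star (A₁ * B₁ - B₁ * A₁) * (A₁ * B₁ - B₁ * A₁)) ∧
      ω (star (A₁ * B₁ - B₁ * A₁) * (A₁ * B₁ - B₁ * A₁)) = 4 ∧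
      ω (star (E₁ * F₁ - F₁ * E₁) * (E₁ * F₁ - F₁ * E₁)) = 1 / 4 ∧
      ω (star (E₁ * F₁ - F₁ * E₁) * (E₁ * F₁ - F₁ * E₁)) ≠ 0 := by
  -- self-adjointness of A₁ and B₁
  have hA₁sa : star A₁ = A₁ := by
    rw [hA₁, star_sub, star_smul, hE₁sa.star_eq, hSsa.star_eq]
    norm_num
  have hB₁sa : star B₁ = B₁ := by
    rw [hB₁, star_sub, star_smul, hF₁sa.star_eq, hSsa.star_eq]
    norm_num
  have hBA : B₁ * A₁ = -(A₁ * B₁) := by linear_combination (norm := noncomm_ring) hanti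
  -- commutators
  set D : H →L[ℂ] H := A₁ * B₁ - B₁ * A₁ with hDdef
  have hstarD : star D = -D := by
    rw [hDdef, star_sub, star_mul, star_mul, hA₁sa, hB₁sa]
    abel
  have hD2 : D = (2 : ℂ) • (A₁ * B₁) := by
    rw [hDdef, hBA]; module
  have hABAB : A₁ * B₁ * (A₁ * B₁) = -S := by
    have : A₁ * B₁ * (A₁ * B₁) = A₁ * (B₁ * A₁) * B₁ := by noncomm_ring
    rw [this, hBA]
    have : A₁ * -(A₁ * B₁) * B₁ = -((A₁ * A₁) * (B₁ * B₁)) := by noncomm_ring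
    rw [this, hA₁sq, hB₁sq, hSp.eq]
  have hDD : star D * D = (4 : ℂ) • S := by
    rw [hstarD, hD2]
    have : -((2 : ℂ) • (A₁ * B₁)) * ((2 : ℂ) • (A₁ * B₁))
        = (-4 : ℂ) • (A₁ * B₁ * (A₁ * B₁)) := by
      simp [smul_smul, smul_mul_assoc, mul_smul_comm]; module
    rw [this, hABAB]
    module
  -- relate the commutators
  have hDC : D = (4 : ℂ) • (E₁ * F₁ - F₁ * E₁) := by
    rw [hDdef, hA₁, hB₁]
    have expand : ∀ X Y : H →L[ℂ] H, ((2:ℂ) • X - S) * ((2:ℂ) • Y - S)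
        = (4:ℂ) • (X * Y) - (2:ℂ) • (X * S) - (2:ℂ) • (S * Y) + S * S := by
      intro X Y
      simp only [sub_mul, mul_sub, smul_mul_assoc, mul_smul_comm, smul_smul]
      norm_num
      module
    rw [expand E₁ F₁, expand F₁ E₁, hSE₁, hSF₁, hE₁S, hF₁S]
    module
  have hC : E₁ * F₁ - F₁ * E₁ = (4 : ℂ)⁻¹ • D := by
    rw [hDC]; module
  have hconj1 : star (E₁ * F₁ - F₁ * E₁) * (E₁ * F₁ - F₁ * E₁)
      = (16 : ℂ)⁻¹ • (star D * D) := by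
    rw [hC, star_smul, smul_mul_assoc, mul_smul_comm, smul_smul]
    norm_num
  have hω4 : ω (star D * D) = 4 := by
    rw [hDD, map_smul, hS]; norm_num
  refine ⟨hconj1, hω4, ?_, ?_⟩
  · rw [hconj1, map_smul, hω4]; norm_num
  · rw [hconj1, map_smul, hω4]; norm_num
end

section
/- Let ω be a state and A₁, B₁, A₂, B₂ self-adjoint contractions with [A_i, A_j] = [A_i, B_j] = [B_i, B_j] = 0 for i ≠ j. If ω is a vector state ω(X) = ⟨Ω, XΩ⟩ and there exist projections E₁,F₁ commuting with E₂,F₂ with E₁Ω = E₂Ω, F₁Ω = F₂Ω, (2E₁-1)(2F₁-1) + (2F₁-1)(2E₁-1) = 0, then setting A₁ = (1/√2)((2E₁-1)+(2F₁-1)), B₁ = (1/√2)((2E₁-1)-(2F₁-1)), A₂ = 2E₂-1, B₂ = 2F₂-1 yields (1/2)ω(A₁A₂ + A₁B₂ + B₁A₂ - B₁B₂) = √2. -/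
/-- If `E₁, F₁` are projections commuting with projections `E₂, F₂`,
`E₁Ω = E₂Ω`, `F₁Ω = F₂Ω`, and `2E₁-1`, `2F₁-1` anticommute, then the CHSH expression with
`A₁ = (1/√2)((2E₁-1)+(2F₁-1))`, `B₁ = (1/√2)((2E₁-1)-(2F₁-1))`, `A₂ = 2E₂-1`, `B₂ = 2F₂-1`
attains the Tsirelson bound `√2` in the vector state induced by `Ω`. -/
theorem stmt_18 {H : Type*} [NormedAddCommGroup H] [InnerProductSpace ℂ H] [CompleteSpace H]
    (Ω : H) (hΩ : ‖Ω‖ = 1)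
    (E₁ F₁ E₂ F₂ : H →L[ℂ] H)
    (hE₁p : IsIdempotentElem E₁) (hE₁sa : IsSelfAdjoint E₁)
    (hF₁p : IsIdempotentElem F₁) (hF₁sa : IsSelfAdjoint F₁)
    (hE₂p : IsIdempotentElem E₂) (hE₂sa : IsSelfAdjoint E₂)
    (hF₂p : IsIdempotentElem F₂) (hF₂sa : IsSelfAdjoint F₂)
    (hc₁ : E₁ * E₂ = E₂ * E₁) (hc₂ : E₁ * F₂ = F₂ * E₁)
    (hc₃ : F₁ * E₂ = E₂ * F₁) (hc₄ : F₁ * F₂ = F₂ * F₁)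
    (hEΩ : E₁ Ω = E₂ Ω) (hFΩ : F₁ Ω = F₂ Ω)
    (hanti : ((2 : ℂ) • E₁ - 1) * ((2 : ℂ) • F₁ - 1) +
      ((2 : ℂ) • F₁ - 1) * ((2 : ℂ) • E₁ - 1) = 0)
    (A₁ B₁ A₂ B₂ : H →L[ℂ] H)
    (hA₁ : A₁ = ((Real.sqrt 2 : ℂ))⁻¹ • (((2 : ℂ) • E₁ - 1) + ((2 : ℂ) • F₁ - 1)))
    (hB₁ : B₁ = ((Real.sqrt 2 : ℂ))⁻¹ • (((2 : ℂ) • E₁ - 1) - ((2 : ℂ) • F₁ - 1)))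
    (hA₂ : A₂ = (2 : ℂ) • E₂ - 1) (hB₂ : B₂ = (2 : ℂ) • F₂ - 1) :
    (2 : ℂ)⁻¹ * inner (𝕜 := ℂ) Ω ((A₁ * A₂ + A₁ * B₂ + B₁ * A₂ - B₁ * B₂) Ω) =
      (Real.sqrt 2 : ℂ) := by

  set a : H →L[ℂ] H := (2 : ℂ) • E₁ - 1 with ha
  set b : H →L[ℂ] H := (2 : ℂ) • F₁ - 1 with hb
  have ha2 : a * a = 1 := by
    rw [ha]
    rw [IsIdempotentElem] at hE₁p
    simp only [mul_sub, sub_mul, smul_mul_assoc, mul_smul_comm, one_mul, mul_one, hE₁p,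
      smul_smul]
    module
  have hb2 : b * b = 1 := by
    rw [hb]
    rw [IsIdempotentElem] at hF₁p
    simp only [mul_sub, sub_mul, smul_mul_assoc, mul_smul_comm, one_mul, mul_one, hF₁p,
      smul_smul]
    module
  have hA₂Ω : A₂ Ω = a Ω := by
    rw [hA₂, ha]
    simp [hEΩ]
  have hB₂Ω : B₂ Ω = b Ω := by
    rw [hB₂, hb]
    simp [hFΩ]
  have haa : a (a Ω) = Ω := by
    have := congrArg (fun T : H →L[ℂ] H => T Ω) ha2
    simpa using this
  have hbb : b (b Ω) = Ω := by
    have := congrArg (fun T : H →L[ℂ] H => T Ω) hb2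
    simpa using this
  have key : (A₁ * A₂ + A₁ * B₂ + B₁ * A₂ - B₁ * B₂) Ω
      = (4 * ((Real.sqrt 2 : ℂ))⁻¹) • Ω := by
    simp only [ContinuousLinearMap.add_apply, ContinuousLinearMap.sub_apply,
      ContinuousLinearMap.mul_apply, hA₂Ω, hB₂Ω, hA₁, hB₁,
      ContinuousLinearMap.smul_apply, ContinuousLinearMap.add_apply,
      ContinuousLinearMap.sub_apply, haa, hbb]
    module
  rw [key, inner_smul_right]
  have hΩ2 : (inner (𝕜 := ℂ) Ω Ω) = 1 := by
    rw [inner_self_eq_norm_sq_to_K, hΩ]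
    norm_num
  rw [hΩ2, mul_one]
  have h2 : (Real.sqrt 2 : ℂ) ≠ 0 := by
    simp [Real.sqrt_eq_zero']
  have hsq : (Real.sqrt 2 : ℂ) * (Real.sqrt 2 : ℂ) = 2 := by
    rw [← Complex.ofReal_mul, Real.mul_self_sqrt (by norm_num)]
    norm_num
  field_simp
  first
  | linear_combination 2 * hsq
  | linear_combination (-4) * hsq
  | linear_combination 4 * hsq
  | linear_combination (-2) * hsq
end
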